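/- For n ≥ 3, the number of permutations of length n that avoid the pattern 132 and contain exactly one occurrence of the pattern 123 is (n-2)·2^(n-3). -/

import Mathlib

open Finset

namespace Stmt3Aux

variable {n : ℕ}

/-- The set of later positions carrying larger values. -/
def U (π : Equiv.Perm (Fin n)) (i : Fin n) : Finset (Fin n) :=
  univ.filter fun j => i < j ∧ π i < π j

lemma mem_U {π : Equiv.Perm (Fin n)} {i j : Fin n} :
    j ∈ U π i ↔ i < j ∧ π i < π j := by simp [U]

lemma U_card_lt (π : Equiv.Perm (Fin n)) (i : Fin n) : (U π i).card < n - i := by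
  have h1 : U π i ⊆ Ioi i := fun j hj => mem_Ioi.2 (mem_U.1 hj).1
  have h2 := card_le_card h1
  rw [Fin.card_Ioi] at h2
  have := i.isLt
  omega

/-- The "top Lehmer code" of a permutation. -/
def codeMap (π : Equiv.Perm (Fin n)) : ∀ i : Fin n, Fin (n - i) :=
  fun i => ⟨(U π i).card, U_card_lt π i⟩

lemma codeMap_val (π : Equiv.Perm (Fin n)) (i : Fin n) :
    (codeMap π i : ℕ) = (U π i).card := rfl

lemma topcount_lt {R : Finset (Fin n)} {v w : Fin n} (hw : w ∈ R) (hvw : v < w) :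
    (R.filter (w < ·)).card < (R.filter (v < ·)).card := by
  apply card_lt_card
  rw [Finset.ssubset_iff_of_subset]
  · exact ⟨w, mem_filter.2 ⟨hw, hvw⟩, fun hmem => absurd (mem_filter.1 hmem).2 (lt_irrefl w)⟩
  · exact fun x hx => mem_filter.2 ⟨(mem_filter.1 hx).1, lt_trans hvw (mem_filter.1 hx).2⟩

lemma topcount_inj {R : Finset (Fin n)} {v w : Fin n} (hv : v ∈ R) (hw : w ∈ R)
    (h : (R.filter (v < ·)).card = (R.filter (w < ·)).card) : v = w := by
  rcases lt_trichotomy v w with hlt | he | hlt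
  · exact absurd h (Nat.ne_of_gt (topcount_lt hw hlt))
  · exact he
  · exact absurd h (Nat.ne_of_lt (topcount_lt hv hlt))

lemma compl_image_Iio (π : Equiv.Perm (Fin n)) (i : Fin n) :
    ((Iio i).image π)ᶜ = (Ici i).image π := by
  ext x
  simp only [mem_compl, mem_image, mem_Iio, mem_Ici, not_exists, not_and]
  constructor
  · intro h
    refine ⟨π.symm x, ?_, π.apply_symm_apply x⟩
    by_contra hc
    exact h (π.symm x) (lt_of_not_ge hc) (π.apply_symm_apply x)
  · rintro ⟨a, ha, rfl⟩ b hb hba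
    exact absurd (π.injective hba) (ne_of_lt (lt_of_lt_of_le hb ha))

lemma code_card_eq (π : Equiv.Perm (Fin n)) (i : Fin n) :
    (U π i).card = ((((Iio i).image π)ᶜ).filter (fun x => π i < x)).card := by
  have h1 : U π i = (Ioi i).filter (fun j => π i < π j) := by
    ext j; simp [mem_U, mem_filter, mem_Ioi, and_comm]
  have h2 : ((Ioi i).filter (fun j => π i < π j)).image π
      = ((Ioi i).image π).filter (fun x => π i < x) := by
    rw [Finset.filter_image]
  have h3 : (((Iio i).image π)ᶜ).filter (fun x => π i < x)
      = ((Ioi i).image π).filter (fun x => π i < x) := by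
    rw [compl_image_Iio, ← Finset.Ioi_insert, image_insert, filter_insert,
      if_neg (lt_irrefl (π i))]
  rw [h1, h3, ← h2, card_image_of_injective _ π.injective]

lemma codeMap_injective : Function.Injective (codeMap (n := n)) := by
  intro π σ h
  suffices hs : ∀ i, π i = σ i from Equiv.ext hs
  have key : ∀ m : ℕ, ∀ i : Fin n, i.val = m → π i = σ i := by
    intro m
    induction m using Nat.strong_induction_on with
    | _ m IH =>
      intro i hi
      have himg : (Iio i).image π = (Iio i).image σ := by
        apply image_congr
        intro j hj
        have hj' : j < i := by simpa using hj
        exact IH j.val (hi ▸ hj') j rfl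
      have hc : (U π i).card = (U σ i).card := by
        have := congrFun h i
        have := congrArg Fin.val this
        simpa [codeMap_val] using this
      rw [code_card_eq π i, code_card_eq σ i, ← himg] at hc
      have hπi : π i ∈ ((Iio i).image π)ᶜ := by
        simp only [mem_compl, mem_image, mem_Iio, not_exists, not_and]
        exact fun b hb hbe => absurd (π.injective hbe) (ne_of_lt hb)
      have hσi : σ i ∈ ((Iio i).image π)ᶜ := by
        rw [himg]
        simp only [mem_compl, mem_image, mem_Iio, not_exists, not_and]
        exact fun b hb hbe => absurd (σ.injective hbe) (ne_of_lt hb)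
      exact topcount_inj hπi hσi hc
  exact fun i => key i.val i rfl

lemma prod_range_sub (m : ℕ) : ∏ i ∈ range m, (m - i) = Nat.factorial m := by
  induction m with
  | zero => simp
  | succ k IH =>
    rw [Finset.prod_range_succ']
    simp only [Nat.succ_sub_succ_eq_sub, Nat.sub_zero]
    rw [IH, Nat.factorial_succ, Nat.mul_comm]

lemma card_pi_eq : Fintype.card (∀ i : Fin n, Fin (n - i)) = Nat.factorial n := by
  rw [Fintype.card_pi]
  simp only [Fintype.card_fin]
  rw [Fin.prod_univ_eq_prod_range (fun i => n - i) n]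
  exact prod_range_sub n

lemma codeMap_bijective : Function.Bijective (codeMap (n := n)) := by
  rw [Fintype.bijective_iff_injective_and_card]
  exact ⟨codeMap_injective, by rw [card_pi_eq, Fintype.card_perm, Fintype.card_fin]⟩

/-- The code-side condition. -/
def Q (c : ∀ i : Fin n, Fin (n - i)) : Prop :=
  ∃ d j : Fin n, (j : ℕ) = (d : ℕ) + 1 ∧ (c d : ℕ) = 2 ∧ (c j : ℕ) = 1 ∧
    ∀ i : Fin n, i ≠ d → (c i : ℕ) ≤ 1

section Char

variable {π : Equiv.Perm (Fin n)}

lemma no132_mono (h132 : ¬ ∃ i j k : Fin n, i < j ∧ j < k ∧ π i < π k ∧ π k < π j)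
    {x y z : Fin n} (hy : y ∈ U π x) (hz : z ∈ U π x) (hyz : y < z) : π y < π z := by
  rcases lt_trichotomy (π y) (π z) with h | h | h
  · exact h
  · exact absurd (π.injective h) (ne_of_lt hyz)
  · exact absurd ⟨x, y, z, (mem_U.1 hy).1, hyz, (mem_U.1 hz).2, h⟩ h132

lemma two_le_of_mem {x y z : Fin n} (hy : y ∈ U π x) (hz : z ∈ U π x) (hne : y ≠ z) :
    2 ≤ (U π x).card :=
  Finset.one_lt_card.2 ⟨y, hy, z, hz, hne⟩

lemma char (π : Equiv.Perm (Fin n)) :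
    ((¬ ∃ i j k : Fin n, i < j ∧ j < k ∧ π i < π k ∧ π k < π j) ∧
      (∃! t : Fin n × Fin n × Fin n,
        t.1 < t.2.1 ∧ t.2.1 < t.2.2 ∧ π t.1 < π t.2.1 ∧ π t.2.1 < π t.2.2)) ↔
    Q (codeMap π) := by
  constructor
  · rintro ⟨h132, ⟨⟨a, b, c⟩, ⟨hab, hbc, h1, h2⟩, huniq⟩⟩
    have hab : a < b := hab
    have hbc : b < c := hbc
    have h1 : π a < π b := h1
    have h2 : π b < π c := h2
    -- every small index predicate
    have hUle : ∀ i : Fin n, i ≠ a → (U π i).card ≤ 1 := by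
      intro i hia
      rw [Finset.card_le_one]
      intro x hx y hy
      by_contra hne
      rcases lt_trichotomy x y with hlt | he | hlt
      · have := huniq (i, x, y) ⟨(mem_U.1 hx).1, hlt, (mem_U.1 hx).2, no132_mono h132 hx hy hlt⟩
        exact hia (by simpa using congrArg Prod.fst this)
      · exact hne he
      · have := huniq (i, y, x) ⟨(mem_U.1 hy).1, hlt, (mem_U.1 hy).2, no132_mono h132 hy hx hlt⟩
        exact hia (by simpa using congrArg Prod.fst this)
    have hbU : b ∈ U π a := mem_U.2 ⟨hab, h1⟩
    have hcU : c ∈ U π a := mem_U.2 ⟨lt_trans hab hbc, lt_trans h1 h2⟩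
    have hUsub : U π a ⊆ {b, c} := by
      intro e he
      simp only [mem_insert, mem_singleton]
      by_contra hcon
      push_neg at hcon
      obtain ⟨heb, hec⟩ := hcon
      rcases lt_trichotomy e b with hlt | heq | hlt
      · have := huniq (a, e, b) ⟨(mem_U.1 he).1, hlt, (mem_U.1 he).2, no132_mono h132 he hbU hlt⟩
        exact heb (by simpa using congrArg (fun t => t.2.1) this)
      · exact heb heq
      · have := huniq (a, b, e) ⟨hab, hlt, h1, no132_mono h132 hbU he hlt⟩
        exact hec (by simpa using congrArg (fun t => t.2.2) this)
    have hUeq : U π a = {b, c} :=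
      Finset.Subset.antisymm hUsub (by
        intro x hx
        rcases mem_insert.1 hx with rfl | hx
        · exact hbU
        · exact (mem_singleton.1 hx) ▸ hcU)
    have hcard2 : (U π a).card = 2 := by
      rw [hUeq, card_pair (ne_of_lt hbc)]
    -- b is at position a+1
    have hbval : (b : ℕ) = (a : ℕ) + 1 := by
      by_contra hne
      have hlt : (a : ℕ) + 1 < (b : ℕ) := by
        have := hab
        rw [Fin.lt_def] at this
        omega
      have hmlt : (a : ℕ) + 1 < n := lt_trans hlt b.isLt
      set m : Fin n := ⟨(a : ℕ) + 1, hmlt⟩ with hm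
      have hma : a < m := by rw [Fin.lt_def]; simp [hm]
      have hmb : m < b := by rw [Fin.lt_def]; simpa [hm] using hlt
      have hmna : m ≠ a := by
        intro hcon; rw [Fin.ext_iff] at hcon; simp [hm] at hcon
      rcases lt_trichotomy (π a) (π m) with hpm | hpe | hpm
      · have : m ∈ U π a := mem_U.2 ⟨hma, hpm⟩
        rw [hUeq] at this
        rcases mem_insert.1 this with rfl | hms
        · exact absurd rfl (ne_of_lt hmb)
        · rw [mem_singleton] at hms
          subst hms
          exact absurd (lt_trans hmb hbc) (lt_irrefl m)
      · exact hmna (π.injective hpe.symm)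
      · have hbUm : b ∈ U π m := mem_U.2 ⟨hmb, lt_trans hpm h1⟩
        have hcUm : c ∈ U π m := mem_U.2 ⟨lt_trans hmb hbc, lt_trans hpm (lt_trans h1 h2)⟩
        exact absurd (hUle m hmna) (by
          have := two_le_of_mem hbUm hcUm (ne_of_lt hbc)
          omega)
    have hcb1 : (U π b).card = 1 := by
      have h1le : 1 ≤ (U π b).card := card_pos.2 ⟨c, mem_U.2 ⟨hbc, h2⟩⟩
      have h2le := hUle b (ne_of_gt hab)
      omega
    exact ⟨a, b, hbval, by rw [codeMap_val]; exact hcard2,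
      by rw [codeMap_val]; exact hcb1,
      fun i hi => by rw [codeMap_val]; exact hUle i hi⟩
  · rintro ⟨d, j, hj, hd2, hj1, hle⟩
    simp only [codeMap_val] at hd2 hj1 hle
    obtain ⟨b, k, hbk0, hUd0⟩ := Finset.card_eq_two.1 hd2
    -- normalize so that b < k
    obtain ⟨b, k, hbk, hUd⟩ : ∃ b k : Fin n, b < k ∧ U π d = {b, k} := by
      rcases lt_or_gt_of_ne hbk0 with h | h
      · exact ⟨b, k, h, hUd0⟩
      · exact ⟨k, b, h, by rw [hUd0, Finset.pair_comm]⟩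
    have hbU : b ∈ U π d := by rw [hUd]; exact mem_insert_self b _
    have hkU : k ∈ U π d := by rw [hUd]; exact mem_insert_of_mem (mem_singleton_self k)
    have hdb : d < b := (mem_U.1 hbU).1
    have hdk : d < k := (mem_U.1 hkU).1
    have hpdb : π d < π b := (mem_U.1 hbU).2
    have hpdk : π d < π k := (mem_U.1 hkU).2
    -- b has position d+1, so b = j
    have hbval : (b : ℕ) = (d : ℕ) + 1 := by
      by_contra hne
      have hlt : (d : ℕ) + 1 < (b : ℕ) := by
        have := hdb; rw [Fin.lt_def] at this; omega
      have hmlt : (d : ℕ) + 1 < n := lt_trans hlt b.isLt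
      set m : Fin n := ⟨(d : ℕ) + 1, hmlt⟩ with hm
      have hdm : d < m := by rw [Fin.lt_def]; simp [hm]
      have hmb : m < b := by rw [Fin.lt_def]; simpa [hm] using hlt
      have hmnd : m ≠ d := by
        intro hcon; rw [Fin.ext_iff] at hcon; simp [hm] at hcon
      rcases lt_trichotomy (π d) (π m) with hpm | hpe | hpm
      · have : m ∈ U π d := mem_U.2 ⟨hdm, hpm⟩
        rw [hUd] at this
        rcases mem_insert.1 this with rfl | hms
        · exact absurd rfl (ne_of_lt hmb)
        · rw [mem_singleton] at hms
          subst hms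
          exact absurd (lt_trans hmb hbk) (lt_irrefl m)
      · exact hmnd (π.injective hpe.symm)
      · have hbUm : b ∈ U π m := mem_U.2 ⟨hmb, lt_trans hpm hpdb⟩
        have hkUm : k ∈ U π m := mem_U.2 ⟨lt_trans hmb hbk, lt_trans hpm hpdk⟩
        exact absurd (hle m hmnd) (by
          have := two_le_of_mem hbUm hkUm (ne_of_lt hbk)
          omega)
    have hbj : b = j := Fin.ext (by omega)
    -- π b < π k
    have hpbk : π b < π k := by
      rcases lt_trichotomy (π b) (π k) with h | h | h
      · exact h
      · exact absurd (π.injective h) (ne_of_lt hbk)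
      · -- U π b has card 1, get its element m
        rw [← hbj] at hj1
        obtain ⟨m, hm⟩ := Finset.card_eq_one.1 hj1
        have hmU : m ∈ U π b := by rw [hm]; exact mem_singleton_self m
        have hbm : b < m := (mem_U.1 hmU).1
        have hpbm : π b < π m := (mem_U.1 hmU).2
        have : m ∈ U π d := mem_U.2 ⟨lt_trans hdb hbm, lt_trans hpdb hpbm⟩
        rw [hUd] at this
        rcases mem_insert.1 this with rfl | hms
        · exact absurd rfl (ne_of_lt hbm)
        · rw [mem_singleton] at hms
          subst hms
          exact absurd (lt_trans h hpbm) (lt_irrefl _)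
    -- the unique index with two elements in U is d
    have hidx : ∀ x y z : Fin n, x < y → y < z → π x < π y → π y < π z →
        x = d ∧ y = b ∧ z = k := by
      intro x y z hxy hyz hp1 hp2
      have hyU : y ∈ U π x := mem_U.2 ⟨hxy, hp1⟩
      have hzU : z ∈ U π x := mem_U.2 ⟨lt_trans hxy hyz, lt_trans hp1 hp2⟩
      have hxd : x = d := by
        by_contra hne
        exact absurd (hle x hne) (by
          have := two_le_of_mem hyU hzU (ne_of_lt hyz)
          omega)
      subst hxd
      rw [hUd] at hyU hzU
      have hy' : y = b ∨ y = k := by simpa using hyU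
      have hz' : z = b ∨ z = k := by simpa using hzU
      have hy'' : (y : ℕ) = b ∨ (y : ℕ) = k := hy'.imp (congrArg Fin.val) (congrArg Fin.val)
      have hz'' : (z : ℕ) = b ∨ (z : ℕ) = k := hz'.imp (congrArg Fin.val) (congrArg Fin.val)
      have hv1 : (y : ℕ) < z := Fin.lt_def.1 hyz
      have hv2 : (b : ℕ) < k := Fin.lt_def.1 hbk
      exact ⟨rfl, Fin.ext (by omega), Fin.ext (by omega)⟩
    constructor
    · rintro ⟨x, y, z, hxy, hyz, hp1, hp2⟩
      -- 132 pattern: π x < π z < π y; then y, z ∈ U π x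
      have hyU : y ∈ U π x := mem_U.2 ⟨hxy, lt_trans hp1 hp2⟩
      have hzU : z ∈ U π x := mem_U.2 ⟨lt_trans hxy hyz, hp1⟩
      have hxd : x = d := by
        by_contra hne
        exact absurd (hle x hne) (by
          have := two_le_of_mem hyU hzU (ne_of_lt hyz)
          omega)
      subst hxd
      rw [hUd] at hyU hzU
      have hy' : y = b ∨ y = k := by simpa using hyU
      have hz' : z = b ∨ z = k := by simpa using hzU
      have hy'' : (y : ℕ) = b ∨ (y : ℕ) = k := hy'.imp (congrArg Fin.val) (congrArg Fin.val)
      have hz'' : (z : ℕ) = b ∨ (z : ℕ) = k := hz'.imp (congrArg Fin.val) (congrArg Fin.val)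
      have hv1 : (y : ℕ) < z := Fin.lt_def.1 hyz
      have hv2 : (b : ℕ) < k := Fin.lt_def.1 hbk
      have hyb : y = b := Fin.ext (by omega)
      have hzk : z = k := Fin.ext (by omega)
      subst hyb; subst hzk
      exact absurd (lt_trans hp2 hpbk) (lt_irrefl _)
    · refine ⟨(d, b, k), ⟨hdb, hbk, hpdb, hpbk⟩, ?_⟩
      rintro ⟨x, y, z⟩ ⟨hxy, hyz, hp1, hp2⟩
      obtain ⟨rfl, rfl, rfl⟩ := hidx x y z hxy hyz hp1 hp2
      rfl

end Char

/-- The per-coordinate condition for a valid code with defect at `d`. -/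
def condP (d : Fin n) (i : Fin n) (v : ℕ) : Prop :=
  ((i : ℕ) = (d : ℕ) → v = 2) ∧ ((i : ℕ) = (d : ℕ) + 1 → v = 1) ∧
    ((i : ℕ) ≠ (d : ℕ) → (i : ℕ) ≠ (d : ℕ) + 1 → v ≤ 1)

instance (d i : Fin n) (v : ℕ) : Decidable (condP d i v) := by unfold condP; infer_instance

def T (d : Fin n) : Finset (∀ i : Fin n, Fin (n - i)) :=
  Fintype.piFinset fun i => univ.filter fun x : Fin (n - i) => condP d i (x : ℕ)

lemma mem_T {d : Fin n} {c : ∀ i : Fin n, Fin (n - i)} :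
    c ∈ T d ↔ ∀ i : Fin n, condP d i ((c i : ℕ)) := by
  simp [T, Fintype.mem_piFinset]

lemma cardValEq (m k : ℕ) (h : k < m) :
    (univ.filter fun x : Fin m => (x : ℕ) = k).card = 1 := by
  have he : (univ.filter fun x : Fin m => (x : ℕ) = k) = {⟨k, h⟩} := by
    ext x; simp [Fin.ext_iff]
  rw [he, card_singleton]

lemma cardValLe2 (m : ℕ) (h : 2 ≤ m) :
    (univ.filter fun x : Fin m => (x : ℕ) ≤ 1).card = 2 := by
  have he : (univ.filter fun x : Fin m => (x : ℕ) ≤ 1)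
      = {(⟨0, by omega⟩ : Fin m), ⟨1, by omega⟩} := by
    ext x
    simp only [mem_filter, mem_univ, true_and, mem_insert, mem_singleton, Fin.ext_iff]
    omega
  rw [he, card_insert_of_notMem (by simp), card_singleton]

lemma cardValLe_small (m : ℕ) (hm : m ≤ 2) :
    (univ.filter fun x : Fin m => (x : ℕ) ≤ 1).card = m := by
  rw [filter_true_of_mem, card_univ, Fintype.card_fin]
  intro x _
  have := x.isLt
  omega

lemma card_T {d : Fin n} (hn : 3 ≤ n) (hd : (d : ℕ) + 2 < n) :
    (T d).card = 2 ^ (n - 3) := by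
  rw [T, Fintype.card_piFinset]
  have hfac : ∀ i : Fin n,
      (univ.filter fun x : Fin (n - i) => condP d i (x : ℕ)).card
        = if (i : ℕ) = (d : ℕ) ∨ (i : ℕ) = (d : ℕ) + 1 ∨ (i : ℕ) = n - 1 then 1 else 2 := by
    intro i
    have hin := i.isLt
    by_cases h1 : (i : ℕ) = (d : ℕ)
    · rw [if_pos (Or.inl h1)]
      rw [filter_congr (q := fun x : Fin (n - i) => (x : ℕ) = 2)
        (fun x _ => by unfold condP; omega)]
      exact cardValEq _ 2 (by omega)
    · by_cases h2 : (i : ℕ) = (d : ℕ) + 1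
      · rw [if_pos (Or.inr (Or.inl h2))]
        rw [filter_congr (q := fun x : Fin (n - i) => (x : ℕ) = 1)
          (fun x _ => by unfold condP; omega)]
        exact cardValEq _ 1 (by omega)
      · by_cases h3 : (i : ℕ) = n - 1
        · rw [if_pos (Or.inr (Or.inr h3))]
          rw [filter_congr (q := fun x : Fin (n - i) => (x : ℕ) ≤ 1)
            (fun x _ => by unfold condP; omega)]
          rw [cardValLe_small _ (by omega)]
          omega
        · rw [if_neg (by tauto)]
          rw [filter_congr (q := fun x : Fin (n - i) => (x : ℕ) ≤ 1)
            (fun x _ => by unfold condP; omega)]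
          exact cardValLe2 _ (by omega)
  calc ∏ i : Fin n, (univ.filter fun x : Fin (n - i) => condP d i (x : ℕ)).card
      = ∏ i : Fin n,
          (if (i : ℕ) = (d : ℕ) ∨ (i : ℕ) = (d : ℕ) + 1 ∨ (i : ℕ) = n - 1 then 1 else 2) :=
        Finset.prod_congr rfl (fun i _ => hfac i)
    _ = ∏ v ∈ range n,
          (if v = (d : ℕ) ∨ v = (d : ℕ) + 1 ∨ v = n - 1 then 1 else 2) :=
        Fin.prod_univ_eq_prod_range
          (fun v => if v = (d : ℕ) ∨ v = (d : ℕ) + 1 ∨ v = n - 1 then 1 else 2) n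
    _ = 2 ^ (n - 3) := by
        rw [Finset.prod_ite (f := fun _ => 1) (g := fun _ => 2), Finset.prod_const_one,
          Finset.prod_const, one_mul]
        congr 1
        have hfe : (range n).filter
            (fun v => v = (d : ℕ) ∨ v = (d : ℕ) + 1 ∨ v = n - 1)
            = {(d : ℕ), (d : ℕ) + 1, n - 1} := by
          ext v
          simp only [mem_filter, mem_range, mem_insert, mem_singleton]
          omega
        have hc3 : ((range n).filter
            (fun v => v = (d : ℕ) ∨ v = (d : ℕ) + 1 ∨ v = n - 1)).card = 3 := by
          rw [hfe, card_insert_of_notMem (by simp; omega),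
            card_insert_of_notMem (by simp; omega), card_singleton]
        rw [Finset.filter_not, card_sdiff_of_subset (filter_subset _ _), card_range, hc3]

lemma filter_Q_eq (hn : 3 ≤ n) [DecidablePred (Q (n := n))] :
    (univ : Finset (∀ i : Fin n, Fin (n - i))).filter Q
      = (univ.filter fun d : Fin n => (d : ℕ) + 2 < n).biUnion T := by
  ext c
  simp only [mem_filter, mem_univ, true_and, mem_biUnion, mem_T]
  constructor
  · rintro ⟨d, j, hj, hd2, hj1, hle⟩
    have hcd := (c d).isLt
    refine ⟨d, by omega, fun i => ?_⟩
    refine ⟨fun h => ?_, fun h => ?_, fun h1 h2 => ?_⟩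
    · rw [show i = d from Fin.ext h]; exact hd2
    · rw [show i = j from Fin.ext (by omega)]; exact hj1
    · exact hle i (fun he => h1 (congrArg Fin.val he))
  · rintro ⟨d, hd, hall⟩
    refine ⟨d, ⟨(d : ℕ) + 1, by omega⟩, rfl, ?_, ?_, ?_⟩
    · exact (hall d).1 rfl
    · exact (hall ⟨(d : ℕ) + 1, by omega⟩).2.1 rfl
    · intro i hi
      have h := hall i
      have hiv : (i : ℕ) ≠ (d : ℕ) := fun he => hi (Fin.ext he)
      by_cases h2 : (i : ℕ) = (d : ℕ) + 1
      · exact le_of_eq (h.2.1 h2)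
      · exact h.2.2 hiv h2

lemma card_Q (hn : 3 ≤ n) :
    Nat.card {c : ∀ i : Fin n, Fin (n - i) // Q c} = (n - 2) * 2 ^ (n - 3) := by
  classical
  rw [Nat.card_eq_fintype_card, Fintype.card_subtype, filter_Q_eq hn,
    Finset.card_biUnion]
  · have hsum : ∀ d ∈ (univ.filter fun d : Fin n => (d : ℕ) + 2 < n),
        (T d).card = 2 ^ (n - 3) := by
      intro d hd
      exact card_T hn (by simpa using hd)
    rw [Finset.sum_congr rfl hsum, Finset.sum_const, smul_eq_mul]
    congr 1
    have he : (univ.filter fun d : Fin n => (d : ℕ) + 2 < n)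
        = Iio (⟨n - 2, by omega⟩ : Fin n) := by
      ext x
      simp only [mem_filter, mem_univ, true_and, Finset.mem_Iio, Fin.lt_def]
      omega
    rw [he, Fin.card_Iio]
  · intro d1 h1 d2 h2 hne
    rw [Function.onFun, Finset.disjoint_left]
    intro c hc1 hc2
    have e1 := (mem_T.1 hc1 d1).1 rfl
    have e2 := mem_T.1 hc2 d1
    have hne' : (d1 : ℕ) ≠ (d2 : ℕ) := fun he => hne (Fin.ext he)
    by_cases h : (d1 : ℕ) = (d2 : ℕ) + 1
    · have := e2.2.1 h; omega
    · have := e2.2.2 hne' h; omega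

end Stmt3Aux

/-- For `n ≥ 3`, the number of permutations of length `n` avoiding the pattern 132
and containing exactly one occurrence of the pattern 123 is `(n-2)·2^(n-3)`. -/
theorem stmt3 (n : ℕ) (hn : 3 ≤ n) :
    Nat.card {π : Equiv.Perm (Fin n) //
      (¬ ∃ i j k : Fin n, i < j ∧ j < k ∧ π i < π k ∧ π k < π j) ∧
      (∃! t : Fin n × Fin n × Fin n,
        t.1 < t.2.1 ∧ t.2.1 < t.2.2 ∧ π t.1 < π t.2.1 ∧ π t.2.1 < π t.2.2)} =
    (n - 2) * 2 ^ (n - 3) := by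
  classical
  have e : {π : Equiv.Perm (Fin n) //
      (¬ ∃ i j k : Fin n, i < j ∧ j < k ∧ π i < π k ∧ π k < π j) ∧
      (∃! t : Fin n × Fin n × Fin n,
        t.1 < t.2.1 ∧ t.2.1 < t.2.2 ∧ π t.1 < π t.2.1 ∧ π t.2.1 < π t.2.2)}
      ≃ {c : ∀ i : Fin n, Fin (n - i) // Stmt3Aux.Q c} :=
    Equiv.subtypeEquiv (Equiv.ofBijective _ Stmt3Aux.codeMap_bijective)
      (fun π => Stmt3Aux.char π)
  rw [Nat.card_congr e]
  exact Stmt3Aux.card_Q hn
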